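/- Let σ > 0 and, for x > 0 and y > 0, let X_∞(x, y) denote the unique z ∈ (0, 1/σ) satisfying z · exp(-σ z) = x · exp(-σ (x + y)). Then X_∞ is differentiable on {(x,y) : x > 0, y > 0} and its partial derivatives are ∂X_∞/∂x = ((1 - σ x)/x) · X_∞/(1 - σ X_∞) and ∂X_∞/∂y = -σ X_∞/(1 - σ X_∞). -/

import Mathlib

open Filter Topology Set

/-- Differentiability and partial derivatives of the asymptotic susceptible fraction
`X∞(x,y)`, characterised as the unique `z ∈ (0, 1/σ)` with `z e^{-σ z} = x e^{-σ (x+y)}`. -/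
theorem xinf_partial_derivatives
    (σ : ℝ) (hσ : 0 < σ) (Xinf : ℝ → ℝ → ℝ)
    (hXinf : ∀ x y : ℝ, 0 < x → 0 < y →
      Xinf x y ∈ Set.Ioo 0 (1 / σ) ∧
      Xinf x y * Real.exp (-σ * Xinf x y) = x * Real.exp (-σ * (x + y))) :
    DifferentiableOn ℝ (fun p : ℝ × ℝ => Xinf p.1 p.2)
      {p : ℝ × ℝ | 0 < p.1 ∧ 0 < p.2} ∧
    ∀ x y : ℝ, 0 < x → 0 < y →
      HasDerivAt (fun x' => Xinf x' y)
        ((1 - σ * x) / x * (Xinf x y / (1 - σ * Xinf x y))) x ∧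
      HasDerivAt (fun y' => Xinf x y')
        (-(σ * Xinf x y) / (1 - σ * Xinf x y)) y := by
  set F : ℝ → ℝ := fun z => z * Real.exp (-σ * z) with hFdef
  have hFd : ∀ z : ℝ, HasStrictDerivAt F (Real.exp (-σ * z) * (1 - σ * z)) z := by
    intro z
    have h1 : HasStrictDerivAt (fun z : ℝ => -σ * z) (-σ) z := by
      simpa using (hasStrictDerivAt_id z).const_mul (-σ)
    have h2 : HasStrictDerivAt (fun z : ℝ => Real.exp (-σ * z))
        (Real.exp (-σ * z) * -σ) z := (Real.hasStrictDerivAt_exp _).comp z h1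
    have := (hasStrictDerivAt_id z).mul h2
    exact this.congr_deriv (by simp; ring)
  have hderiv : ∀ z : ℝ, deriv F z = Real.exp (-σ * z) * (1 - σ * z) := fun z =>
    (hFd z).hasDerivAt.deriv
  have hinj : Set.InjOn F (Set.Ioo 0 (1 / σ)) := by
    have hmono : StrictMonoOn F (Set.Icc 0 (1 / σ)) := by
      apply strictMonoOn_of_deriv_pos (convex_Icc _ _)
      · exact (Continuous.mul continuous_id (Real.continuous_exp.comp
          (continuous_const.mul continuous_id))).continuousOn
      · intro z hz
        rw [interior_Icc] at hz
        rw [hderiv]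
        have hz2 : σ * z < 1 := by
          have := hz.2
          calc σ * z < σ * (1 / σ) := by exact mul_lt_mul_of_pos_left this hσ
          _ = 1 := by field_simp
        exact mul_pos (Real.exp_pos _) (by linarith)
    exact (hmono.injOn).mono Set.Ioo_subset_Icc_self
  -- key local representation
  have key : ∀ x y : ℝ, 0 < x → 0 < y → ∃ φ : ℝ → ℝ,
      HasStrictDerivAt φ (Real.exp (-σ * Xinf x y) * (1 - σ * Xinf x y))⁻¹
        (x * Real.exp (-σ * (x + y))) ∧
      ∀ᶠ p : ℝ × ℝ in 𝓝 (x, y), Xinf p.1 p.2 = φ (p.1 * Real.exp (-σ * (p.1 + p.2))) := by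
    intro x y hx hy
    obtain ⟨hz, heq⟩ := hXinf x y hx hy
    set z := Xinf x y
    have h1z : 0 < 1 - σ * z := by
      have : σ * z < 1 := by
        calc σ * z < σ * (1 / σ) := mul_lt_mul_of_pos_left hz.2 hσ
        _ = 1 := by field_simp
      linarith
    set d := Real.exp (-σ * z) * (1 - σ * z) with hd
    have hd0 : d ≠ 0 := by positivity
    have hFz : HasStrictDerivAt F d z := hFd z
    refine ⟨hFz.localInverse F d z hd0, ?_, ?_⟩
    · have := hFz.to_localInverse (hf' := hd0)
      have hFzeq : F z = x * Real.exp (-σ * (x + y)) := heq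
      rwa [hFzeq] at this
    · set φ := hFz.localInverse F d z hd0 with hφ
      have hA : ∀ᶠ w in 𝓝 (F z), F (φ w) = w :=
        (hFz.hasStrictFDerivAt_equiv hd0).eventually_right_inverse
      have hB : ∀ᶠ w in 𝓝 (F z), φ w ∈ Set.Ioo 0 (1 / σ) := by
        have hc : ContinuousAt φ (F z) :=
          (hFz.hasStrictFDerivAt_equiv hd0).localInverse_continuousAt
        have hφz : φ (F z) = z :=
          (hFz.hasStrictFDerivAt_equiv hd0).localInverse_apply_image
        have : Set.Ioo (0:ℝ) (1/σ) ∈ 𝓝 (φ (F z)) := by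
          rw [hφz]; exact (isOpen_Ioo).mem_nhds hz
        exact hc this
      have hg : Continuous (fun p : ℝ × ℝ => p.1 * Real.exp (-σ * (p.1 + p.2))) := by
        continuity
      have hgx : (fun p : ℝ × ℝ => p.1 * Real.exp (-σ * (p.1 + p.2))) (x, y) = F z := heq.symm
      have htend : Tendsto (fun p : ℝ × ℝ => p.1 * Real.exp (-σ * (p.1 + p.2)))
          (𝓝 (x, y)) (𝓝 (F z)) := by
        rw [← hgx]; exact hg.continuousAt
      have hC := htend.eventually (hA.and hB)
      have hpos : ∀ᶠ p : ℝ × ℝ in 𝓝 (x, y), 0 < p.1 ∧ 0 < p.2 := by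
        have : IsOpen {p : ℝ × ℝ | 0 < p.1 ∧ 0 < p.2} :=
          (isOpen_lt continuous_const continuous_fst).inter
            (isOpen_lt continuous_const continuous_snd)
        exact this.mem_nhds ⟨hx, hy⟩
      filter_upwards [hC, hpos] with p hp hppos
      obtain ⟨hXp, hXeq⟩ := hXinf p.1 p.2 hppos.1 hppos.2
      exact hinj hXp hp.2 (hXeq.trans hp.1.symm)
  constructor
  · intro p hp
    obtain ⟨φ, hφd, hφeq⟩ := key p.1 p.2 hp.1 hp.2
    have hgd : DifferentiableAt ℝ (fun q : ℝ × ℝ => q.1 * Real.exp (-σ * (q.1 + q.2))) p := by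
      apply DifferentiableAt.mul differentiableAt_fst
      exact (Real.differentiable_exp _).comp _
        (((differentiableAt_fst.add differentiableAt_snd).const_mul (-σ)))
    have hd : DifferentiableAt ℝ (fun q : ℝ × ℝ => φ (q.1 * Real.exp (-σ * (q.1 + q.2)))) p :=
      (hφd.hasDerivAt.differentiableAt).comp p hgd
    have : DifferentiableAt ℝ (fun q : ℝ × ℝ => Xinf q.1 q.2) p := by
      apply hd.congr_of_eventuallyEq
      filter_upwards [hφeq] with q hq using hq
    exact this.differentiableWithinAt
  · intro x y hx hy
    obtain ⟨hz, heq⟩ := hXinf x y hx hy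
    obtain ⟨φ, hφd, hφeq⟩ := key x y hx hy
    set z := Xinf x y
    have h1z : 0 < 1 - σ * z := by
      have : σ * z < 1 := by
        calc σ * z < σ * (1 / σ) := mul_lt_mul_of_pos_left hz.2 hσ
        _ = 1 := by field_simp
      linarith
    have hexz : (0:ℝ) < Real.exp (-σ * z) := Real.exp_pos _
    constructor
    · -- x partial
      have hgx : HasDerivAt (fun x' : ℝ => x' * Real.exp (-σ * (x' + y)))
          (Real.exp (-σ * (x + y)) * (1 - σ * x)) x := by
        have h1 : HasDerivAt (fun x' : ℝ => -σ * (x' + y)) (-σ) x := by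
          simpa using ((hasDerivAt_id x).add_const y).const_mul (-σ)
        have h2 : HasDerivAt (fun x' : ℝ => Real.exp (-σ * (x' + y)))
            (Real.exp (-σ * (x + y)) * -σ) x := (Real.hasDerivAt_exp _).comp x h1
        have := (hasDerivAt_id x).mul h2
        exact this.congr_deriv (by simp; ring)
      have hcomp : HasDerivAt (fun x' : ℝ => φ (x' * Real.exp (-σ * (x' + y))))
          ((Real.exp (-σ * z) * (1 - σ * z))⁻¹ * (Real.exp (-σ * (x + y)) * (1 - σ * x))) x :=
        hφd.hasDerivAt.comp x hgx
      have heqx : ∀ᶠ x' in 𝓝 x, Xinf x' y = φ (x' * Real.exp (-σ * (x' + y))) := by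
        have ht : Tendsto (fun x' : ℝ => ((x', y) : ℝ × ℝ)) (𝓝 x) (𝓝 (x, y)) :=
          (continuous_id.prodMk continuous_const).continuousAt
        exact ht.eventually hφeq
      have := hcomp.congr_of_eventuallyEq (heqx.mono fun x' h => h)
      refine this.congr_deriv (Eq.symm ?_)
      have hex : Real.exp (-σ * (x + y)) = z * Real.exp (-σ * z) / x := by
        rw [eq_div_iff hx.ne']
        linarith [heq]
      rw [hex]
      field_simp
    · -- y partial
      have hgy : HasDerivAt (fun y' : ℝ => x * Real.exp (-σ * (x + y')))
          (x * Real.exp (-σ * (x + y)) * -σ) y := by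
        have h1 : HasDerivAt (fun y' : ℝ => -σ * (x + y')) (-σ) y := by
          simpa using ((hasDerivAt_id y).const_add x).const_mul (-σ)
        have h2 : HasDerivAt (fun y' : ℝ => Real.exp (-σ * (x + y')))
            (Real.exp (-σ * (x + y)) * -σ) y := (Real.hasDerivAt_exp _).comp y h1
        have := h2.const_mul x
        exact this.congr_deriv (by ring)
      have hcomp : HasDerivAt (fun y' : ℝ => φ (x * Real.exp (-σ * (x + y'))))
          ((Real.exp (-σ * z) * (1 - σ * z))⁻¹ * (x * Real.exp (-σ * (x + y)) * -σ)) y :=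
        hφd.hasDerivAt.comp y hgy
      have heqy : ∀ᶠ y' in 𝓝 y, Xinf x y' = φ (x * Real.exp (-σ * (x + y'))) := by
        have ht : Tendsto (fun y' : ℝ => ((x, y') : ℝ × ℝ)) (𝓝 y) (𝓝 (x, y)) :=
          (continuous_const.prodMk continuous_id).continuousAt
        exact ht.eventually hφeq
      have := hcomp.congr_of_eventuallyEq (heqy.mono fun y' h => h)
      refine this.congr_deriv (Eq.symm ?_)
      rw [← heq]
      field_simp
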